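/- Let N > 1, Nε > 1, Q_S > 0, A* > 0, R₀² > 1 and 0 ≤ c < 1 (with c = ε_F Λ_tot/Λ_F^crit). Define R²_{0,SITc} = c + (R₀²/2)·(1 − Q_S/(N−1) + √((1 − Q_S/(N−1))² + 4Q_S(Nε−1)/(N−1)²)). Then R²_{0,SITc} > 1 if and only if Q_S·(1 − R₀²(Nε−1)/((N−1)(1−c))) < (N−1)·(1 − (1−c)/R₀²). -/

import Mathlib

open Real

lemma stmt15_aux (R k a X s : ℝ) (hR : 0 < R) (hk : 0 < k) (hX : 0 < X)
    (hs0 : 0 ≤ s) (hs : s ^ 2 = a ^ 2 + X) :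
    (k < R / 2 * (a + s)) ↔ (2 * k - R * a) ^ 2 < R ^ 2 * (a ^ 2 + X) := by
  have hRX : 0 < R ^ 2 * X := by positivity
  constructor
  · intro h
    have h' : 2 * k - R * a < R * s := by nlinarith
    rcases le_or_gt 0 (2 * k - R * a) with ht | ht
    · nlinarith
    · have hkt : k * (2 * k - R * a) < 0 := mul_neg_of_pos_of_neg hk ht
      nlinarith [mul_pos hk hk]
  · intro h
    have h' : 2 * k - R * a < R * s := by
      nlinarith [mul_nonneg hR.le hs0]
    nlinarith

theorem stmt15 (N ε QS R0sq c : ℝ) (hN : 1 < N) (hNε : 1 < N * ε)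
    (hQS : 0 < QS) (hR0 : 1 < R0sq) (hc0 : 0 ≤ c) (hc1 : c < 1) :
    1 < c + (R0sq / 2) * (1 - QS / (N - 1) +
        Real.sqrt ((1 - QS / (N - 1)) ^ 2 +
          4 * QS * (N * ε - 1) / (N - 1) ^ 2)) ↔
      QS * (1 - R0sq * (N * ε - 1) / ((N - 1) * (1 - c))) <
        (N - 1) * (1 - (1 - c) / R0sq) := by
  have hu : (0:ℝ) < N - 1 := by linarith
  have hk : (0:ℝ) < 1 - c := by linarith
  have hR : (0:ℝ) < R0sq := by linarith
  have hE : (0:ℝ) < N * ε - 1 := by linarith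
  have hX : 0 < 4 * QS * (N * ε - 1) / (N - 1) ^ 2 :=
    div_pos (by nlinarith) (by positivity)
  have hDpos : (0:ℝ) ≤ (1 - QS / (N - 1)) ^ 2 + 4 * QS * (N * ε - 1) / (N - 1) ^ 2 := by
    nlinarith [sq_nonneg (1 - QS / (N - 1))]
  have hs : Real.sqrt ((1 - QS / (N - 1)) ^ 2 + 4 * QS * (N * ε - 1) / (N - 1) ^ 2) ^ 2
      = (1 - QS / (N - 1)) ^ 2 + 4 * QS * (N * ε - 1) / (N - 1) ^ 2 :=
    Real.sq_sqrt hDpos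
  have hs0 := Real.sqrt_nonneg ((1 - QS / (N - 1)) ^ 2 + 4 * QS * (N * ε - 1) / (N - 1) ^ 2)
  have key := stmt15_aux R0sq (1 - c) (1 - QS / (N - 1))
      (4 * QS * (N * ε - 1) / (N - 1) ^ 2)
      (Real.sqrt ((1 - QS / (N - 1)) ^ 2 + 4 * QS * (N * ε - 1) / (N - 1) ^ 2))
      hR hk hX hs0 hs
  have h1 : (1 < c + (R0sq / 2) * (1 - QS / (N - 1) +
        Real.sqrt ((1 - QS / (N - 1)) ^ 2 +
          4 * QS * (N * ε - 1) / (N - 1) ^ 2))) ↔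
      ((1 - c) < R0sq / 2 * (1 - QS / (N - 1) +
        Real.sqrt ((1 - QS / (N - 1)) ^ 2 +
          4 * QS * (N * ε - 1) / (N - 1) ^ 2))) := by
    constructor <;> intro h <;> linarith
  rw [h1, key]
  have hu' : (N - 1) ≠ 0 := ne_of_gt hu
  have hk' : (1 - c) ≠ 0 := ne_of_gt hk
  have hR' : R0sq ≠ 0 := ne_of_gt hR
  constructor <;> intro h <;>
  · field_simp at h ⊢
    nlinarith [h, mul_pos hu hu, sq_nonneg (N - 1)]
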